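/- Let n ∈ ℙ and let {t_{k,n} : 1 ≤ k ≤ n} be a finite sequence of real numbers. Then the matrix transform kernel satisfies K_n^T = D_{2^{|n|}} · Σ_{k=1}^n t_{k,n} − w_{2^{|n|}−1} · t_{1,n} · (2^{|n|} − 1) · K_{2^{|n|}−1} + w_{2^{|n|}−1} · Σ_{k=1}^{2^{|n|}−2} Δt_{2^{|n|}−k−1,n} · k · K_k + r_{|n|} · Σ_{k=1}^{n−2^{|n|}} t_{2^{|n|}+k,n} · D_k (as functions on G). -/

import Mathlib

open MeasureTheory
open scoped ENNReal

noncomputable section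

/-- The dyadic group: countable product of `ZMod 2`. -/
abbrev G : Type := ℕ → ZMod 2

instance : TopologicalSpace (ZMod 2) := ⊥
instance : DiscreteTopology (ZMod 2) := ⟨rfl⟩
instance : IsTopologicalAddGroup (ZMod 2) :=
  { continuous_add := continuous_of_discreteTopology
    continuous_neg := continuous_of_discreteTopology }

instance : MeasurableSpace G := borel G
instance : BorelSpace G := ⟨rfl⟩

/-- The normalized Haar measure on the dyadic group. -/
def haarG : Measure G :=
  Measure.addHaarMeasure ⟨⟨Set.univ, isCompact_univ⟩, by simp⟩

/-- Rademacher functions. -/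
def rade (k : ℕ) (x : G) : ℝ := (-1 : ℝ) ^ (x k).val

/-- Walsh–Paley functions. -/
def walsh (n : ℕ) (x : G) : ℝ :=
  ∏ k ∈ Finset.range (n + 1), if n.testBit k then rade k x else 1

/-- Dirichlet kernels. -/
def Dker (n : ℕ) (x : G) : ℝ := ∑ k ∈ Finset.range n, walsh k x

/-- Fejér kernels. -/
def Fker (n : ℕ) (x : G) : ℝ := (1 / n : ℝ) * ∑ k ∈ Finset.Icc 1 n, Dker k x

/-- Walsh–Fourier coefficients. -/
def fourierCoef (f : G → ℝ) (j : ℕ) : ℝ := ∫ x, f x * walsh j x ∂haarG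

/-- Partial sums of the Walsh–Fourier series. -/
def partialSum (f : G → ℝ) (k : ℕ) (x : G) : ℝ :=
  ∑ j ∈ Finset.range k, fourierCoef f j * walsh j x

/-- Fejér means. -/
def fejerMean (n : ℕ) (f : G → ℝ) (x : G) : ℝ :=
  (1 / n : ℝ) * ∑ k ∈ Finset.Icc 1 n, partialSum f k x

/-- Matrix transform means. -/
def sigmaT (t : ℕ → ℕ → ℝ) (n : ℕ) (f : G → ℝ) (x : G) : ℝ :=
  ∑ k ∈ Finset.Icc 1 n, t k n * partialSum f k x

/-- Matrix transform kernels. -/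
def KT (t : ℕ → ℕ → ℝ) (n : ℕ) (x : G) : ℝ :=
  ∑ k ∈ Finset.Icc 1 n, t k n * Dker k x

/-- `Δ t_{k,n} = t_{k,n} - t_{k+1,n}` with convention `t_{n+1,n} = 0`. -/
def deltaT (t : ℕ → ℕ → ℝ) (k n : ℕ) : ℝ :=
  t k n - (if k + 1 ≤ n then t (k + 1) n else 0)

/-- `|x| = ∑ x_i 2^{-(i+1)}` for `x ∈ G`. -/
def normG (x : G) : ℝ := ∑' i, ((x i).val : ℝ) / 2 ^ (i + 1)

/-- The `L_p` modulus of continuity. -/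
def omegaP (p : ℝ≥0∞) (f : G → ℝ) (δ : ℝ) : ℝ≥0∞ :=
  ⨆ (t : G) (_ : normG t < δ), eLpNorm (fun x => f (x + t) - f x) p haarG

/-- Dyadic intervals `I_n` (around `0`). -/
def Iset (n : ℕ) : Set G := {y | ∀ i < n, y i = 0}

/-- `e_t ∈ G`: the `t`-th coordinate is `1`, the rest are `0`. -/
def eG (t : ℕ) : G := fun i => if i = t then 1 else 0

/-- The order `|n|` of a positive integer: `2^{|n|} ≤ n < 2^{|n|+1}`. -/
def ord (n : ℕ) : ℕ := Nat.log 2 n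

lemma rade_sq (k : ℕ) (x : G) : rade k x * rade k x = 1 := by
  rw [rade, ← pow_add, Even.neg_one_pow ⟨_, rfl⟩]

lemma prod_testBit_ext (n : ℕ) (x : G) {A B : ℕ} (hA : n < 2 ^ A) (hAB : A ≤ B) :
    ∏ k ∈ Finset.range B, (if n.testBit k then rade k x else 1)
      = ∏ k ∈ Finset.range A, (if n.testBit k then rade k x else 1) := by
  refine (Finset.prod_subset (Finset.range_subset_range.2 hAB) ?_).symm
  intro k _ hk'
  have hk : A ≤ k := by simpa using hk'
  have : n < 2 ^ k := lt_of_lt_of_le hA (Nat.pow_le_pow_right (by norm_num) hk)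
  simp [Nat.testBit_lt_two_pow this]

lemma walsh_eq_prod {n M : ℕ} (h : n < 2 ^ M) (x : G) :
    walsh n x = ∏ k ∈ Finset.range M, (if n.testBit k then rade k x else 1) := by
  have h1 : n < 2 ^ (n + 1) :=
    lt_of_lt_of_le (Nat.lt_two_pow_self (n := n)) (Nat.pow_le_pow_right (by norm_num) (Nat.le_succ n))
  calc walsh n x = ∏ k ∈ Finset.range (max (n+1) M), (if n.testBit k then rade k x else 1) :=
        (prod_testBit_ext n x h1 (le_max_left _ _)).symm
    _ = ∏ k ∈ Finset.range M, (if n.testBit k then rade k x else 1) := by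
        exact prod_testBit_ext n x h (le_max_right (n+1) M)

lemma walsh_mul (a b : ℕ) (x : G) : walsh a x * walsh b x = walsh (a ^^^ b) x := by
  set M := max a b + 1 with hM
  have ha : a < 2 ^ M := lt_of_lt_of_le (Nat.lt_two_pow_self (n := a))
    (Nat.pow_le_pow_right (by norm_num) (by omega))
  have hb : b < 2 ^ M := lt_of_lt_of_le (Nat.lt_two_pow_self (n := b))
    (Nat.pow_le_pow_right (by norm_num) (by omega))
  have hx : a ^^^ b < 2 ^ M := Nat.xor_lt_two_pow ha hb
  rw [walsh_eq_prod ha, walsh_eq_prod hb, walsh_eq_prod hx, ← Finset.prod_mul_distrib]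
  refine Finset.prod_congr rfl fun k _ => ?_
  rw [Nat.testBit_xor]
  cases h1 : a.testBit k <;> cases h2 : b.testBit k <;> simp [rade_sq]

lemma walsh_two_pow (N : ℕ) (x : G) : walsh (2 ^ N) x = rade N x := by
  rw [walsh_eq_prod (Nat.pow_lt_pow_right (by norm_num) (Nat.lt_succ_self N)) x]
  rw [Finset.prod_eq_single_of_mem N (Finset.mem_range.2 (Nat.lt_succ_self N))]
  · simp [Nat.testBit_two_pow_self]
  · intro k _ hk
    simp [Nat.testBit_two_pow_of_ne (Ne.symm hk)]

lemma two_pow_add_eq_xor {N i : ℕ} (h : i < 2 ^ N) : 2 ^ N + i = 2 ^ N ^^^ i := by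
  apply Nat.eq_of_testBit_eq
  intro j
  have hm := Nat.testBit_two_pow_mul_add 1 h j
  rw [mul_one] at hm
  rw [hm, Nat.testBit_xor]
  rcases lt_trichotomy j N with hj | rfl | hj
  · simp [hj, Nat.testBit_two_pow_of_ne (Nat.ne_of_gt hj)]
  · simp [Nat.testBit_two_pow_self, Nat.testBit_lt_two_pow h]
  · have h1 : Nat.testBit i j = false :=
      Nat.testBit_lt_two_pow (h.trans_le (Nat.pow_le_pow_right (by norm_num) hj.le))
    have h2 : Nat.testBit 1 (j - N) = false := by
      rw [show (1:ℕ) = 2 ^ 0 by rfl]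
      exact Nat.testBit_two_pow_of_ne (by omega)
    simp [Nat.not_lt.2 hj.le, h1, h2, Nat.testBit_two_pow_of_ne (Nat.ne_of_lt hj), if_neg]

lemma two_pow_sub_one_xor {N l : ℕ} (h : l < 2 ^ N) :
    (2 ^ N - 1) ^^^ l = 2 ^ N - 1 - l := by
  apply Nat.eq_of_testBit_eq
  intro j
  have he : 2 ^ N - 1 - l = 2 ^ N - (l + 1) := by omega
  rw [he, Nat.testBit_two_pow_sub_succ h, Nat.testBit_xor, Nat.testBit_two_pow_sub_one]
  by_cases hj : j < N
  · simp [hj]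
  · have : l.testBit j = false :=
      Nat.testBit_lt_two_pow (h.trans_le (Nat.pow_le_pow_right (by norm_num) (le_of_not_gt hj)))
    simp [hj, this]

lemma walsh_two_pow_add {N i : ℕ} (h : i < 2 ^ N) (x : G) :
    walsh (2 ^ N + i) x = rade N x * walsh i x := by
  rw [two_pow_add_eq_xor h, ← walsh_mul, walsh_two_pow]

lemma walsh_two_pow_sub {N l : ℕ} (h : l < 2 ^ N) (x : G) :
    walsh (2 ^ N - 1 - l) x = walsh (2 ^ N - 1) x * walsh l x := by
  rw [← two_pow_sub_one_xor h, ← walsh_mul]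

lemma Dker_succ (k : ℕ) (x : G) : Dker (k + 1) x = Dker k x + walsh k x :=
  Finset.sum_range_succ _ _

lemma Dker_zero (x : G) : Dker 0 x = 0 := by simp [Dker]

lemma Dker_two_pow_add {N j : ℕ} (h : j ≤ 2 ^ N) (x : G) :
    Dker (2 ^ N + j) x = Dker (2 ^ N) x + rade N x * Dker j x := by
  induction j with
  | zero => simp [Dker_zero]
  | succ j ih =>
    have hj : j < 2 ^ N := by omega
    rw [show 2 ^ N + (j + 1) = (2 ^ N + j) + 1 by omega, Dker_succ, ih (by omega),
      Dker_succ, walsh_two_pow_add hj]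
    ring

lemma Dker_two_pow_sub {N j : ℕ} (h : j ≤ 2 ^ N) (x : G) :
    Dker (2 ^ N - j) x = Dker (2 ^ N) x - walsh (2 ^ N - 1) x * Dker j x := by
  induction j with
  | zero => simp [Dker_zero]
  | succ j ih =>
    have hj : j < 2 ^ N := by omega
    have hstep : Dker (2 ^ N - j) x = Dker (2 ^ N - (j + 1)) x + walsh (2 ^ N - 1 - j) x := by
      rw [show 2 ^ N - j = (2 ^ N - (j + 1)) + 1 by omega, Dker_succ,
        show 2 ^ N - (j + 1) = 2 ^ N - 1 - j by omega]
    have := ih (by omega)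
    rw [hstep, walsh_two_pow_sub hj] at this
    rw [Dker_succ]
    linarith [this]

lemma Fker_mul (j : ℕ) (x : G) :
    (j : ℝ) * Fker j x = ∑ i ∈ Finset.Icc 1 j, Dker i x := by
  rcases j with _ | j
  · simp
  · rw [Fker]
    have : ((j : ℝ) + 1) ≠ 0 := by positivity
    field_simp

lemma abel_Q (a S D : ℕ → ℝ) (hS0 : S 0 = 0) (hS : ∀ j, S (j + 1) = S j + D (j + 1)) :
    ∀ M, ∑ j ∈ Finset.Icc 1 M, a j * D j
      = a (M + 1) * S M + ∑ j ∈ Finset.Icc 1 M, (a j - a (j + 1)) * S j := by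
  intro M
  induction M with
  | zero => simp [hS0]
  | succ M ih =>
    rw [Finset.sum_Icc_succ_top (by omega), Finset.sum_Icc_succ_top (by omega) (fun j => (a j - a (j+1)) * S j), ih, hS]
    ring

lemma abel_main (a S D : ℕ → ℝ) (hS0 : S 0 = 0) (hS : ∀ j, S (j + 1) = S j + D (j + 1)) (M : ℕ) :
    ∑ j ∈ Finset.Icc 1 M, a j * D j
      = a M * S M + ∑ j ∈ Finset.Icc 1 (M - 1), (a j - a (j + 1)) * S j := by
  rcases M with _ | M
  · simp [hS0]
  · rw [abel_Q a S D hS0 hS, Finset.sum_Icc_succ_top (by omega) (fun j => (a j - a (j+1)) * S j)]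
    simp only [Nat.succ_sub_one]
    ring

theorem statement8 (n : ℕ) (hn : 1 ≤ n) (t : ℕ → ℕ → ℝ) (x : G) :
    KT t n x =
      Dker (2 ^ ord n) x * (∑ k ∈ Finset.Icc 1 n, t k n)
      - walsh (2 ^ ord n - 1) x * t 1 n * ((2 : ℝ) ^ ord n - 1) * Fker (2 ^ ord n - 1) x
      + walsh (2 ^ ord n - 1) x *
          (∑ k ∈ Finset.Icc 1 (2 ^ ord n - 2), deltaT t (2 ^ ord n - k - 1) n * k * Fker k x)
      + rade (ord n) x *
          (∑ k ∈ Finset.Icc 1 (n - 2 ^ ord n), t (2 ^ ord n + k) n * Dker k x) := by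
  set N := ord n with hN
  have hmn : 2 ^ N ≤ n := Nat.pow_log_le_self 2 (by omega)
  have hnm : n < 2 ^ N * 2 := by
    have := Nat.lt_pow_succ_log_self (by norm_num : 1 < 2) n
    calc n < 2 ^ (Nat.log 2 n).succ := this
      _ = 2 ^ N * 2 := by rw [pow_succ]; rfl
  have hm1 : 1 ≤ 2 ^ N := Nat.one_le_two_pow
  -- generic splitting of sums over Icc 1 n
  have hsplit : ∀ f : ℕ → ℝ, ∑ k ∈ Finset.Icc 1 n, f k
      = ∑ k ∈ Finset.Icc 1 (2 ^ N), f k + ∑ k ∈ Finset.Icc 1 (n - 2 ^ N), f (2 ^ N + k) := by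
    intro f
    have e1 : ∀ b : ℕ, Finset.Icc 1 b = Finset.Ioc 0 b := fun b => Finset.Icc_add_one_left_eq_Ioc 0 b
    rw [e1, e1, e1, ← Finset.sum_Ioc_consecutive f (Nat.zero_le (2 ^ N)) hmn]
    congr 1
    refine Finset.sum_nbij' (fun k => k - 2 ^ N) (fun k => 2 ^ N + k) ?_ ?_ ?_ ?_ ?_
    · intro a ha; simp only [Finset.mem_Ioc] at *; omega
    · intro a ha; simp only [Finset.mem_Ioc] at *; omega
    · intro a ha; simp only [Finset.mem_Ioc] at ha; omega
    · intro a ha; simp only [Finset.mem_Ioc] at ha; omega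
    · intro a ha; simp only [Finset.mem_Ioc] at ha
      rw [show 2 ^ N + (a - 2 ^ N) = a by omega]
  -- second block
  have hblock2 : ∑ k ∈ Finset.Icc 1 (n - 2 ^ N), t (2 ^ N + k) n * Dker (2 ^ N + k) x
      = (∑ k ∈ Finset.Icc 1 (n - 2 ^ N), t (2 ^ N + k) n) * Dker (2 ^ N) x
        + rade N x * ∑ k ∈ Finset.Icc 1 (n - 2 ^ N), t (2 ^ N + k) n * Dker k x := by
    rw [Finset.sum_mul, Finset.mul_sum, ← Finset.sum_add_distrib]
    refine Finset.sum_congr rfl fun k hk => ?_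
    simp only [Finset.mem_Icc] at hk
    rw [Dker_two_pow_add (show k ≤ 2 ^ N by omega)]
    ring
  -- first block
  have hdrop : ∑ k ∈ Finset.Icc 1 (2 ^ N), t k n * Dker (2 ^ N - k) x
      = ∑ k ∈ Finset.Icc 1 (2 ^ N - 1), t k n * Dker (2 ^ N - k) x := by
    refine (Finset.sum_subset (Finset.Icc_subset_Icc_right (by omega)) ?_).symm
    intro k hk hk'
    simp only [Finset.mem_Icc] at hk hk'
    have hk2 : k = 2 ^ N := by omega
    simp [hk2, Dker_zero]
  have hrefl : ∑ k ∈ Finset.Icc 1 (2 ^ N - 1), t k n * Dker (2 ^ N - k) x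
      = ∑ j ∈ Finset.Icc 1 (2 ^ N - 1), t (2 ^ N - j) n * Dker j x := by
    refine Finset.sum_nbij' (fun k => 2 ^ N - k) (fun j => 2 ^ N - j) ?_ ?_ ?_ ?_ ?_
    · intro a ha; simp only [Finset.mem_Icc] at *; omega
    · intro a ha; simp only [Finset.mem_Icc] at *; omega
    · intro a ha; simp only [Finset.mem_Icc] at ha; omega
    · intro a ha; simp only [Finset.mem_Icc] at ha; omega
    · intro a ha; simp only [Finset.mem_Icc] at ha
      rw [show 2 ^ N - (2 ^ N - a) = a by omega]
  have hblock1 : ∑ k ∈ Finset.Icc 1 (2 ^ N), t k n * Dker k x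
      = (∑ k ∈ Finset.Icc 1 (2 ^ N), t k n) * Dker (2 ^ N) x
        - walsh (2 ^ N - 1) x * ∑ j ∈ Finset.Icc 1 (2 ^ N - 1), t (2 ^ N - j) n * Dker j x := by
    have h1 : ∀ k ∈ Finset.Icc 1 (2 ^ N), t k n * Dker k x
        = t k n * Dker (2 ^ N) x - walsh (2 ^ N - 1) x * (t k n * Dker (2 ^ N - k) x) := by
      intro k hk
      simp only [Finset.mem_Icc] at hk
      have hkk : Dker k x = Dker (2 ^ N - (2 ^ N - k)) x := by
        rw [show 2 ^ N - (2 ^ N - k) = k by omega]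
      rw [hkk, Dker_two_pow_sub (by omega)]
      ring
    rw [Finset.sum_congr rfl h1, Finset.sum_sub_distrib, ← Finset.sum_mul, ← Finset.mul_sum,
      hdrop, hrefl]
  -- Abel summation
  have habel : ∑ j ∈ Finset.Icc 1 (2 ^ N - 1), t (2 ^ N - j) n * Dker j x
      = t (2 ^ N - (2 ^ N - 1)) n * (((2 ^ N - 1 : ℕ) : ℝ) * Fker (2 ^ N - 1) x)
        + ∑ j ∈ Finset.Icc 1 (2 ^ N - 1 - 1),
            (t (2 ^ N - j) n - t (2 ^ N - (j + 1)) n) * ((j : ℝ) * Fker j x) :=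
    abel_main (fun j => t (2 ^ N - j) n) (fun j => (j : ℝ) * Fker j x) (fun j => Dker j x)
      (by simp) (fun j => by
        rw [Fker_mul, Fker_mul, Finset.sum_Icc_succ_top (by omega)]) (2 ^ N - 1)
  -- relate the deltaT sum in the goal
  have hdel : ∑ k ∈ Finset.Icc 1 (2 ^ N - 2), deltaT t (2 ^ N - k - 1) n * k * Fker k x
      = -∑ k ∈ Finset.Icc 1 (2 ^ N - 1 - 1),
          (t (2 ^ N - k) n - t (2 ^ N - (k + 1)) n) * ((k : ℝ) * Fker k x) := by
    rw [show 2 ^ N - 1 - 1 = 2 ^ N - 2 by omega, ← Finset.sum_neg_distrib]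
    refine Finset.sum_congr rfl fun k hk => ?_
    simp only [Finset.mem_Icc] at hk
    rw [deltaT, if_pos (show 2 ^ N - k - 1 + 1 ≤ n by omega),
      show 2 ^ N - k - 1 + 1 = 2 ^ N - k by omega,
      show 2 ^ N - (k + 1) = 2 ^ N - k - 1 by omega]
    ring
  have hcast : ((2 ^ N - 1 : ℕ) : ℝ) = (2 : ℝ) ^ N - 1 := by
    rw [Nat.cast_sub hm1]
    push_cast
    ring
  have h11 : 2 ^ N - (2 ^ N - 1) = 1 := by omega
  rw [KT, hsplit (fun k => t k n * Dker k x), hsplit (fun k => t k n), hblock1, hblock2,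
    habel, hdel, h11, hcast]
  ring
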